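/- arXiv:2601.01421 — 2 statements merged into one kernel-verified Lean document; each statement's English description precedes it below -/
import Mathlib

section
/- Let c be a choice function on a finite nonempty set X with |X| ≥ 2. Then c is strongly harmful (i.e., sp(c) = |X|−1) if and only if c is inconsistent, i.e., for all distinct x, y ∈ X there is a reversal (A, B) of c with c(A) = x and c(B) = y. -/
variable {X : Type*}

/-- A strict linear order: asymmetric, transitive, complete. -/
def IsSLO (r : X → X → Prop) : Prop :=
  (∀ a b : X, r a b → ¬ r b a) ∧ (∀ a b d : X, r a b → r b d → r a d) ∧
    (∀ a b : X, a ≠ b → r a b ∨ r b a)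

/-- The set of the top `i` elements of `X` with respect to `r`
(those with fewer than `i` elements strictly above them). -/
def topSet (r : X → X → Prop) (i : ℕ) : Set X := {a | Set.ncard {b | r b a} < i}

/-- The `i`-th harmful distortion of `r`: the top `i` elements are moved,
in reverse order, below all the other elements. -/
def harmful (r : X → X → Prop) (i : ℕ) : X → X → Prop := fun a b =>
  (b ∈ topSet r i ∧ (a ∈ topSet r i → r b a)) ∨
    (a ∉ topSet r i ∧ b ∉ topSet r i ∧ r a b)

/-- A choice function selects an element from every nonempty menu. -/
def IsChoice (c : Finset X → X) : Prop := ∀ A : Finset X, A.Nonempty → c A ∈ A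

/-- `x` is the `r`-maximum of the menu `A`. -/
def IsMaxOf (r : X → X → Prop) (A : Finset X) (x : X) : Prop :=
  x ∈ A ∧ ∀ y ∈ A, y ≠ x → r x y

/-- A reversal (violation of WARP) of `c`. -/
def IsReversal [DecidableEq X] (c : Finset X → X) (A B : Finset X) : Prop :=
  A.Nonempty ∧ B.Nonempty ∧ A ≠ B ∧ c A ≠ c B ∧ c A ∈ A ∩ B ∧ c B ∈ A ∩ B

/-- `I` is (the index set of) a rationalization by self-punishment of `c` by `r`. -/
def RSP [Fintype X] (c : Finset X → X) (r : X → X → Prop) (I : Finset ℕ) : Prop :=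
  I.Nonempty ∧ (∀ i ∈ I, i ≤ Fintype.card X - 1) ∧
    ∀ A : Finset X, A.Nonempty → ∃ i ∈ I, IsMaxOf (harmful r i) A (c A)

/-- The degree of self-punishment of `c`: the minimum over all strict linear orders `r`
and all rationalizations by self-punishment of `c` by `r` of the maximal index used. -/
noncomputable def sp [Fintype X] (c : Finset X → X) : ℕ :=
  sInf { m : ℕ | ∃ r : X → X → Prop, IsSLO r ∧ ∃ I : Finset ℕ,
    RSP c r I ∧ m ∈ I ∧ ∀ i ∈ I, i ≤ m }

/-- `c` is inconsistent: every ordered pair of distinct items is selected in some reversal. -/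
def Inconsistent [DecidableEq X] (c : Finset X → X) : Prop :=
  ∀ x y : X, x ≠ y → ∃ A B : Finset X, IsReversal c A B ∧ c A = x ∧ c B = y

/-- The revealed preference `▷^{c,x}`. -/
def cxPref (c : Finset X → X) (x : X) : X → X → Prop := fun y z =>
  (y = x ∧ z ≠ x) ∨
    (y ≠ x ∧ z ≠ x ∧ y ≠ z ∧ ∃ A : Finset X, x ∉ A ∧ z ∈ A ∧ c A = y)

/-- `c` violates WARP under constant nonreciprocal selection of `j` items. -/
def ViolatesCNS [Fintype X] [DecidableEq X] (c : Finset X → X) (j : ℕ) : Prop :=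
  (∀ D : Finset X, D.card < j → ∃ A B : Finset X, IsReversal c A B ∧ c A ∉ D ∧ c B ∉ D) ∧
    ∃ xs : Finset X, xs.card = j ∧
      (∀ A B : Finset X, IsReversal c A B → c A ∈ xs ∨ c B ∈ xs) ∧
      (∀ x ∈ xs, ∃ A B : Finset X, ∃ y : X, IsReversal c A B ∧ y ∉ xs ∧
        ((c A = x ∧ c B = y) ∨ (c A = y ∧ c B = x)))

/-- The relation `▷^c` built from the witnesses `x 1, …, x j`. -/
def witnessPref (c : Finset X → X) (x : ℕ → X) (j : ℕ) : X → X → Prop := fun y z =>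
  (∃ g h : ℕ, 1 ≤ g ∧ g < h ∧ h ≤ j ∧ y = x g ∧ z = x h) ∨
    ((∀ g : ℕ, 1 ≤ g → g ≤ j → y ≠ x g) ∧ (∀ g : ℕ, 1 ≤ g → g ≤ j → z ≠ x g) ∧
      ∃ A : Finset X, z ∈ A ∧ c A = y) ∨
    ((∃ g : ℕ, 1 ≤ g ∧ g ≤ j ∧ y = x g) ∧ (∀ g : ℕ, 1 ≤ g → g ≤ j → z ≠ x g))

noncomputable def rk (r : X → X → Prop) (a : X) : ℕ := Set.ncard {b | r b a}

lemma mem_topSet_iff (r : X → X → Prop) (i : ℕ) (a : X) : a ∈ topSet r i ↔ rk r a < i :=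
  Iff.rfl

lemma rk_lt_of_r [Fintype X] {r : X → X → Prop} (hr : IsSLO r) {x y : X} (h : r y x) :
    rk r y < rk r x := by
  have hy : y ∉ {b | r b y} := fun hy => hr.1 _ _ hy hy
  have hsub : insert y {b | r b y} ⊆ {b | r b x} := by
    rintro b (rfl | hb)
    · exact h
    · exact hr.2.1 _ _ _ hb h
  calc rk r y < (insert y {b | r b y}).ncard := by
        rw [Set.ncard_insert_of_notMem hy (Set.toFinite _)]; exact Nat.lt_succ_self _
    _ ≤ _ := Set.ncard_le_ncard hsub (Set.toFinite _)

lemma rk_le [Fintype X] {r : X → X → Prop} (hr : IsSLO r) (x : X) :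
    rk r x ≤ Fintype.card X - 1 := by
  have hx : x ∉ {b | r b x} := fun h => hr.1 _ _ h h
  have hsub : {b | r b x} ⊆ Set.univ \ {x} := fun b hb => ⟨trivial, fun hb' => hx (hb' ▸ hb)⟩
  have := Set.ncard_le_ncard hsub (Set.toFinite _)
  rwa [Set.ncard_diff_singleton_of_mem (Set.mem_univ x), Set.ncard_univ,
    Nat.card_eq_fintype_card] at this

lemma isMaxOf_harmful_rk [Fintype X] {r : X → X → Prop} (hr : IsSLO r) {A : Finset X} {x : X}
    (hx : x ∈ A) : IsMaxOf (harmful r (rk r x)) A x := by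
  have hxt : x ∉ topSet r (rk r x) := by rw [mem_topSet_iff]; omega
  refine ⟨hx, fun y hy hyx => ?_⟩
  by_cases hyt : y ∈ topSet r (rk r x)
  · exact Or.inl ⟨hyt, fun hxx => absurd hxx hxt⟩
  · refine Or.inr ⟨hxt, hyt, ?_⟩
    rcases hr.2.2 x y (Ne.symm hyx) with h | h
    · exact h
    · exact absurd ((mem_topSet_iff r _ y).2 (rk_lt_of_r hr h)) hyt

lemma exists_rmin [Fintype X] {r : X → X → Prop} (hr : IsSLO r) {A : Finset X}
    (hA : A.Nonempty) : ∃ s ∈ A, ∀ b ∈ A, b ≠ s → r b s := by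
  obtain ⟨s, hs, hmax⟩ := A.exists_max_image (rk r) hA
  refine ⟨s, hs, fun b hb hbs => ?_⟩
  rcases hr.2.2 b s hbs with h | h
  · exact h
  · exact absurd (rk_lt_of_r hr h) (not_lt.2 (hmax b hb))

lemma rk_min [Fintype X] {r : X → X → Prop} (hr : IsSLO r) {s : X}
    (hs : ∀ b, b ≠ s → r b s) : rk r s = Fintype.card X - 1 := by
  have : {b | r b s} = Set.univ \ {s} := by
    ext b
    simp only [Set.mem_setOf_eq, Set.mem_diff, Set.mem_univ, true_and, Set.mem_singleton_iff]
    exact ⟨fun h hb => hr.1 _ _ h (hb ▸ h), fun h => hs b h⟩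
  rw [rk, this, Set.ncard_diff_singleton_of_mem (Set.mem_univ s), Set.ncard_univ,
    Nat.card_eq_fintype_card]

lemma rk_secondmin [Fintype X] {r : X → X → Prop} (hr : IsSLO r) {s x' : X} (hsx : s ≠ x')
    (hs : ∀ b, b ≠ s → r b s) (hx' : ∀ b, b ≠ s → b ≠ x' → r b x') :
    rk r x' = Fintype.card X - 2 := by
  have hxs : r x' s := hs x' (Ne.symm hsx)
  have : {b | r b x'} = Set.univ \ {s, x'} := by
    ext b
    simp only [Set.mem_setOf_eq, Set.mem_diff, Set.mem_univ, true_and, Set.mem_insert_iff,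
      Set.mem_singleton_iff, not_or]
    constructor
    · intro h
      refine ⟨fun hb => ?_, fun hb => hr.1 _ _ h (hb ▸ h)⟩
      exact hr.1 _ _ hxs (hb ▸ h)
    · intro ⟨h1, h2⟩; exact hx' b h1 h2
  rw [rk, this]
  have h2 : ({s, x'} : Set X).ncard = 2 := Set.ncard_pair hsx
  have := Set.ncard_add_ncard_compl ({s, x'} : Set X)
  rw [Nat.card_eq_fintype_card] at this
  have hcompl : Set.univ \ ({s, x'} : Set X) = ({s, x'} : Set X)ᶜ := by
    ext b; simp
  rw [hcompl]
  omega

lemma not_harmful_min_secondmin [Fintype X] {r : X → X → Prop} (hr : IsSLO r) {s x' : X}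
    (hsx : s ≠ x') (hs : ∀ b, b ≠ s → r b s) (hx' : ∀ b, b ≠ s → b ≠ x' → r b x')
    {i : ℕ} (hi : i ≤ Fintype.card X - 2) : ¬ harmful r i s x' := by
  have h1 : rk r s = Fintype.card X - 1 := rk_min hr hs
  have h2 : rk r x' = Fintype.card X - 2 := rk_secondmin hr hsx hs hx'
  rintro (⟨ht, _⟩ | ⟨_, _, hrs⟩)
  · rw [mem_topSet_iff] at ht; omega
  · exact hr.1 _ _ (hs x' (Ne.symm hsx)) hrs

section SPaux

variable {X : Type*}

/-- Auxiliary: generic rationalization shows `card X - 1` is always achievable. -/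
lemma sp_generic_mem [Fintype X] [DecidableEq X] (c : Finset X → X) (hc : IsChoice c)
    (hcard : 2 ≤ Fintype.card X) :
    Fintype.card X - 1 ∈ { m : ℕ | ∃ r : X → X → Prop, IsSLO r ∧ ∃ I : Finset ℕ,
      RSP c r I ∧ m ∈ I ∧ ∀ i ∈ I, i ≤ m } := by
  classical
  let e := Fintype.equivFin X
  set r : X → X → Prop := fun a b => (e a : ℕ) < (e b : ℕ) with hrdef
  have hSLO : IsSLO r := by
    refine ⟨fun a b => Nat.lt_asymm, fun a b d => Nat.lt_trans, fun a b hab => ?_⟩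
    have : (e a : ℕ) ≠ (e b : ℕ) := fun h => hab (e.injective (Fin.val_injective h))
    simp only [hrdef]
    omega
  refine ⟨r, hSLO, Finset.range (Fintype.card X),
    ⟨⟨0, Finset.mem_range.2 (by omega)⟩, fun i hi => by
      simp only [Finset.mem_range] at hi; omega, fun A hA => ?_⟩,
    Finset.mem_range.2 (by omega), fun i hi => by simp only [Finset.mem_range] at hi; omega⟩
  refine ⟨rk r (c A), Finset.mem_range.2 ?_, isMaxOf_harmful_rk hSLO (hc A hA)⟩
  have := rk_le hSLO (c A)
  omega

/-- Auxiliary: if some ordered pair is never "revealed", a cheaper rationalization exists. -/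
lemma sp_cheap_mem [Fintype X] [DecidableEq X] (c : Finset X → X) (hc : IsChoice c)
    (hcard : 2 ≤ Fintype.card X) {s x' : X} (hsx : s ≠ x')
    (h : ∀ A : Finset X, A.Nonempty → c A = s → x' ∉ A) :
    Fintype.card X - 2 ∈ { m : ℕ | ∃ r : X → X → Prop, IsSLO r ∧ ∃ I : Finset ℕ,
      RSP c r I ∧ m ∈ I ∧ ∀ i ∈ I, i ≤ m } := by
  classical
  set n := Fintype.card X with hn
  let e := Fintype.equivFin X
  set key : X → ℕ := fun a => if a = s then n + 1 else if a = x' then n else (e a : ℕ)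
    with hkeydef
  set r : X → X → Prop := fun a b => key a < key b with hrdef
  have hks : key s = n + 1 := by simp [hkeydef]
  have hkx : key x' = n := by simp [hkeydef, Ne.symm hsx]
  have hkey_lt : ∀ a, a ≠ s → a ≠ x' → key a < n := by
    intro a h1 h2
    simp only [hkeydef, if_neg h1, if_neg h2]
    exact (e a).is_lt
  have hne : ∀ a b : X, a ≠ b → key a ≠ key b := by
    intro a b hab hk
    apply hab
    by_cases has : a = s
    · by_cases hbs : b = s
      · rw [has, hbs]
      · exfalso; rw [has, hks] at hk
        by_cases hbx : b = x'
        · rw [hbx, hkx] at hk; omega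
        · have := hkey_lt b hbs hbx; omega
    · by_cases hbs : b = s
      · exfalso; rw [hbs, hks] at hk
        by_cases hax : a = x'
        · rw [hax, hkx] at hk; omega
        · have := hkey_lt a has hax; omega
      · by_cases hax : a = x'
        · by_cases hbx : b = x'
          · rw [hax, hbx]
          · exfalso; rw [hax, hkx] at hk; have := hkey_lt b hbs hbx; omega
        · by_cases hbx : b = x'
          · exfalso; rw [hbx, hkx] at hk; have := hkey_lt a has hax; omega
          · have ha : key a = (e a : ℕ) := by simp only [hkeydef, if_neg has, if_neg hax]
            have hb : key b = (e b : ℕ) := by simp only [hkeydef, if_neg hbs, if_neg hbx]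
            rw [ha, hb] at hk
            exact e.injective (Fin.val_injective hk)
  have hSLO : IsSLO r := by
    refine ⟨fun a b => Nat.lt_asymm, fun a b d => Nat.lt_trans, fun a b hab => ?_⟩
    have := hne a b hab
    simp only [hrdef]
    omega
  have hs_min : ∀ b, b ≠ s → r b s := by
    intro b hb
    show key b < key s
    rw [hks]
    by_cases hbx : b = x'
    · rw [hbx, hkx]; omega
    · have := hkey_lt b hb hbx; omega
  have hx'_min : ∀ b, b ≠ s → b ≠ x' → r b x' := by
    intro b h1 h2
    show key b < key x'
    rw [hkx]
    exact hkey_lt b h1 h2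
  have hrks : rk r s = n - 1 := rk_min hSLO hs_min
  have hrkx : rk r x' = n - 2 := rk_secondmin hSLO hsx hs_min hx'_min
  have hrk_bound : ∀ a, a ≠ s → rk r a ≤ n - 2 := by
    intro a ha
    by_cases hax : a = x'
    · rw [hax, hrkx]
    · have := rk_lt_of_r hSLO (hx'_min a ha hax)
      omega
  refine ⟨r, hSLO, Finset.range (n - 1),
    ⟨⟨0, Finset.mem_range.2 (by omega)⟩, fun i hi => by
      simp only [Finset.mem_range] at hi; omega, fun A hA => ?_⟩,
    Finset.mem_range.2 (by omega), fun i hi => by simp only [Finset.mem_range] at hi; omega⟩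
  by_cases hcs : c A = s
  · have hx'A : x' ∉ A := h A hA hcs
    refine ⟨n - 2, Finset.mem_range.2 (by omega), hc A hA, fun y hy hyne => ?_⟩
    rw [hcs] at hyne
    have hys : y ≠ s := hyne
    have hyx : y ≠ x' := fun hh => hx'A (hh ▸ hy)
    have hytop : y ∈ topSet r (n - 2) := by
      rw [mem_topSet_iff]
      have := rk_lt_of_r hSLO (hx'_min y hys hyx)
      omega
    have hstop : c A ∉ topSet r (n - 2) := by
      rw [mem_topSet_iff, hcs, hrks]
      omega
    exact Or.inl ⟨hytop, fun hh => absurd hh hstop⟩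
  · refine ⟨rk r (c A), Finset.mem_range.2 ?_, isMaxOf_harmful_rk hSLO (hc A hA)⟩
    have := hrk_bound (c A) hcs
    omega

end SPaux

theorem stmt18 [Fintype X] [DecidableEq X] (c : Finset X → X) (hc : IsChoice c)
    (hcard : 2 ≤ Fintype.card X) :
    sp c = Fintype.card X - 1 ↔ Inconsistent c := by
  have hspdef : sp c = sInf { m : ℕ | ∃ r : X → X → Prop, IsSLO r ∧ ∃ I : Finset ℕ,
      RSP c r I ∧ m ∈ I ∧ ∀ i ∈ I, i ≤ m } := rfl
  have hS1 := sp_generic_mem c hc hcard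
  constructor
  · intro hsp x y hxy
    have key : ∀ u v : X, u ≠ v → ∃ A : Finset X, A.Nonempty ∧ c A = u ∧ v ∈ A := by
      intro u v huv
      by_contra hno
      push_neg at hno
      have hmem := sp_cheap_mem c hc hcard huv hno
      have hle := Nat.sInf_le hmem
      rw [← hspdef] at hle
      omega
    obtain ⟨A, hA, hcA, hyA⟩ := key x y hxy
    obtain ⟨B, hB, hcB, hxB⟩ := key y x hxy.symm
    refine ⟨A, B, ⟨hA, hB, ?_, ?_, ?_, ?_⟩, hcA, hcB⟩
    · rintro rfl
      exact hxy (hcA ▸ hcB ▸ rfl)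
    · rw [hcA, hcB]; exact hxy
    · rw [Finset.mem_inter, hcA]
      exact ⟨hcA ▸ hc A hA, hxB⟩
    · rw [Finset.mem_inter, hcB]
      exact ⟨hyA, hcB ▸ hc B hB⟩
  · intro hinc
    rw [hspdef]
    refine le_antisymm (Nat.sInf_le hS1) (le_csInf ⟨_, hS1⟩ ?_)
    rintro m ⟨r, hr, I, ⟨hIne, hIb, hrat⟩, hmI, hImax⟩
    by_contra hlt
    push_neg at hlt
    have : Nonempty X := Fintype.card_pos_iff.1 (by omega)
    obtain ⟨s, _, hs⟩ := exists_rmin hr (Finset.univ_nonempty)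
    have herase : (Finset.univ.erase s).Nonempty := by
      rw [← Finset.card_pos, Finset.card_erase_of_mem (Finset.mem_univ s), Finset.card_univ]
      omega
    obtain ⟨x', hx'mem, hx'⟩ := exists_rmin hr herase
    have hsx : s ≠ x' := (Finset.ne_of_mem_erase hx'mem).symm
    obtain ⟨A, B, hrev, hcA, hcB⟩ := hinc s x' hsx
    have hx'A : x' ∈ A := by
      have h6 := hrev.2.2.2.2.2
      rw [Finset.mem_inter] at h6
      exact hcB ▸ h6.1
    obtain ⟨i, hiI, hmax⟩ := hrat A hrev.1
    have hharm : harmful r i (c A) x' := hmax.2 x' hx'A (by rw [hcA]; exact hsx.symm)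
    rw [hcA] at hharm
    exact not_harmful_min_secondmin hr hsx (fun b hb => hs b (Finset.mem_univ b) hb)
      (fun b h1 h2 => hx' b (Finset.mem_erase.2 ⟨h1, Finset.mem_univ b⟩) h2)
      (le_trans (hImax i hiI) (by omega)) hharm
end

section
/- For finite nonempty X, let T(X) denote the number of choice functions on X and let T(X, sh) denote the number of inconsistent choice functions on X. Then the ratio T(X, sh)/T(X) tends to 1 as |X| tends to infinity; that is, for every ε > 0 there is N ∈ ℕ such that for every finite set X with |X| ≥ N, T(X, sh) ≥ (1 − ε) · T(X). -/
variable {X : Type*}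

section StmtNineteenAux

open Finset

private lemma count_pi {Y : Type*} [Fintype Y] [DecidableEq Y] (q : Finset Y → Y → Prop) :
    Nat.card {c : Finset Y → Y // ∀ A, q A (c A)} = ∏ A : Finset Y, Nat.card {z : Y // q A z} := by
  rw [Nat.card_congr (Equiv.subtypePiEquivPi (p := q)), Nat.card_pi]

private lemma card_split {α : Type*} [Fintype α] (p q : α → Prop) :
    Nat.card {a : α // p a ∧ q a} + Nat.card {a : α // p a ∧ ¬ q a} = Nat.card {a : α // p a} := by
  classical
  simp only [Nat.card_eq_fintype_card, Fintype.card_subtype]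
  rw [← filter_filter, ← filter_filter, card_filter_add_card_filter_not]

private lemma qc_eq_pc {Y : Type*} [DecidableEq Y] [Fintype Y] {x y : Y} {A : Finset Y}
    (h : ¬(x ∈ A ∧ y ∈ A)) :
    Nat.card {z : Y // (A.Nonempty → z ∈ A) ∧ (x ∈ A → y ∈ A → z ≠ x)} =
      Nat.card {z : Y // A.Nonempty → z ∈ A} :=
  Nat.card_congr (Equiv.subtypeEquivRight (fun z => by tauto))

private lemma pc_S {Y : Type*} [DecidableEq Y] [Fintype Y] {x : Y} {A : Finset Y} (hx : x ∈ A) :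
    Nat.card {z : Y // A.Nonempty → z ∈ A} = A.card := by
  rw [Nat.card_congr (Equiv.subtypeEquivRight (q := fun z => z ∈ A)
    (fun z => ⟨fun h => h ⟨x, hx⟩, fun h _ => h⟩)), Nat.card_eq_fintype_card, Fintype.card_coe]

private lemma qc_S {Y : Type*} [DecidableEq Y] [Fintype Y] {x y : Y} {A : Finset Y}
    (hx : x ∈ A) (hy : y ∈ A) :
    Nat.card {z : Y // (A.Nonempty → z ∈ A) ∧ (x ∈ A → y ∈ A → z ≠ x)} = A.card - 1 := by
  rw [Nat.card_congr (Equiv.subtypeEquivRight (q := fun z => z ∈ A.erase x)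
    (fun z => ⟨fun ⟨h1, h2⟩ => Finset.mem_erase.2 ⟨h2 hx hy, h1 ⟨x, hx⟩⟩,
      fun h => ⟨fun _ => (Finset.mem_erase.1 h).2, fun _ _ => (Finset.mem_erase.1 h).1⟩⟩)),
    Nat.card_eq_fintype_card, Fintype.card_coe, Finset.card_erase_of_mem hx]

private lemma pair_nat {Y : Type*} [Fintype Y] [DecidableEq Y] (x y : Y) :
    Nat.card {c : Finset Y → Y // ∀ A, (A.Nonempty → c A ∈ A) ∧ (x ∈ A → y ∈ A → c A ≠ x)} *
      Fintype.card Y ^ (univ.filter fun A : Finset Y => x ∈ A ∧ y ∈ A).card ≤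
    Nat.card {c : Finset Y → Y // IsChoice c} *
      (Fintype.card Y - 1) ^ (univ.filter fun A : Finset Y => x ∈ A ∧ y ∈ A).card := by
  classical
  have hT : Nat.card {c : Finset Y → Y // IsChoice c}
      = ∏ A : Finset Y, Nat.card {z : Y // A.Nonempty → z ∈ A} :=
    count_pi (fun A z => A.Nonempty → z ∈ A)
  have hB := count_pi (fun (A : Finset Y) (z : Y) => (A.Nonempty → z ∈ A) ∧ (x ∈ A → y ∈ A → z ≠ x))
  rw [hT, hB]
  set S : Finset (Finset Y) := univ.filter fun A : Finset Y => x ∈ A ∧ y ∈ A with hS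
  set q : Finset Y → ℕ := fun A => Nat.card {z : Y // (A.Nonempty → z ∈ A) ∧ (x ∈ A → y ∈ A → z ≠ x)}
  set p : Finset Y → ℕ := fun A => Nat.card {z : Y // A.Nonempty → z ∈ A}
  have hsplitq := Finset.prod_filter_mul_prod_filter_not univ (fun A : Finset Y => x ∈ A ∧ y ∈ A) q
  have hsplitp := Finset.prod_filter_mul_prod_filter_not univ (fun A : Finset Y => x ∈ A ∧ y ∈ A) p
  rw [← hsplitq, ← hsplitp]
  have hrest : ∏ A ∈ univ.filter (fun A : Finset Y => ¬(x ∈ A ∧ y ∈ A)), q A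
      = ∏ A ∈ univ.filter (fun A : Finset Y => ¬(x ∈ A ∧ y ∈ A)), p A := by
    refine Finset.prod_congr rfl fun A hA => ?_
    exact qc_eq_pc (Finset.mem_filter.1 hA).2
  have hmain : (∏ A ∈ S, q A) * Fintype.card Y ^ S.card ≤ (∏ A ∈ S, p A) * (Fintype.card Y - 1) ^ S.card := by
    rw [← Finset.prod_const (b := Fintype.card Y), ← Finset.prod_const (b := Fintype.card Y - 1),
      ← Finset.prod_mul_distrib, ← Finset.prod_mul_distrib]
    refine Finset.prod_le_prod' fun A hA => ?_
    obtain ⟨-, hx, hy⟩ := Finset.mem_filter.1 hA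
    rw [show q A = A.card - 1 from qc_S hx hy, show p A = A.card from pc_S hx]
    have ham : A.card ≤ Fintype.card Y := Finset.card_le_univ A
    have h1 : (A.card - 1) * Fintype.card Y = A.card * Fintype.card Y - Fintype.card Y := by
      rw [Nat.sub_mul, one_mul]
    have h2 : A.card * (Fintype.card Y - 1) = A.card * Fintype.card Y - A.card := by
      rw [mul_comm A.card, Nat.sub_mul, one_mul, mul_comm]
    rw [h1, h2]
    exact Nat.sub_le_sub_left ham _
  calc (∏ A ∈ S, q A) * (∏ A ∈ univ.filter (fun A : Finset Y => ¬(x ∈ A ∧ y ∈ A)), q A) *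
        Fintype.card Y ^ S.card
      = ((∏ A ∈ S, q A) * Fintype.card Y ^ S.card) *
        (∏ A ∈ univ.filter (fun A : Finset Y => ¬(x ∈ A ∧ y ∈ A)), q A) := by ring
    _ ≤ ((∏ A ∈ S, p A) * (Fintype.card Y - 1) ^ S.card) *
        (∏ A ∈ univ.filter (fun A : Finset Y => ¬(x ∈ A ∧ y ∈ A)), p A) := by
        rw [hrest]; exact Nat.mul_le_mul_right _ hmain
    _ = (∏ A ∈ S, p A) * (∏ A ∈ univ.filter (fun A : Finset Y => ¬(x ∈ A ∧ y ∈ A)), p A) *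
        (Fintype.card Y - 1) ^ S.card := by ring

private lemma K_eq {Y : Type*} [Fintype Y] [DecidableEq Y] {x y : Y} (hxy : x ≠ y) :
    (univ.filter fun A : Finset Y => x ∈ A ∧ y ∈ A).card = 2 ^ (Fintype.card Y - 2) := by
  classical
  have h1 : (univ.filter fun A : Finset Y => x ∈ A ∧ y ∈ A).card
      = ((univ \ {x, y} : Finset Y)).powerset.card := by
    refine Finset.card_bij' (fun A _ => A \ {x, y}) (fun B _ => B ∪ {x, y}) ?_ ?_ ?_ ?_
    · intro A hA
      simp only [Finset.mem_powerset]
      intro z hz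
      simp only [Finset.mem_sdiff, Finset.mem_univ, true_and] at hz ⊢
      exact hz.2
    · intro B hB
      simp only [Finset.mem_powerset] at hB
      simp only [Finset.mem_filter, Finset.mem_univ, true_and, Finset.mem_union,
        Finset.mem_insert, Finset.mem_singleton]
      tauto
    · intro A hA
      simp only [Finset.mem_filter, Finset.mem_univ, true_and] at hA
      ext z
      simp only [Finset.mem_union, Finset.mem_sdiff, Finset.mem_insert, Finset.mem_singleton]
      constructor
      · rintro (⟨h, -⟩ | (rfl | rfl)) <;> [exact h; exact hA.1; exact hA.2]
      · intro hz
        by_cases h : z = x ∨ z = y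
        · exact Or.inr h
        · exact Or.inl ⟨hz, h⟩
    · intro B hB
      simp only [Finset.mem_powerset] at hB
      ext z
      simp only [Finset.mem_sdiff, Finset.mem_union, Finset.mem_insert, Finset.mem_singleton]
      constructor
      · rintro ⟨h1 | h2, h3⟩
        · exact h1
        · exact absurd h2 h3
      · intro hz
        have := hB hz
        simp only [Finset.mem_sdiff, Finset.mem_univ, true_and, Finset.mem_insert,
          Finset.mem_singleton] at this
        exact ⟨Or.inl hz, this⟩
  rw [h1, Finset.card_powerset, Finset.card_sdiff_of_subset (Finset.subset_univ _), Finset.card_univ,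
    Finset.card_pair hxy]

private lemma sq_le_two_pow {n : ℕ} (hn : 8 ≤ n) : n ^ 2 ≤ 2 ^ (n - 2) := by
  induction n, hn using Nat.le_induction with
  | base => norm_num
  | succ n hn ih =>
    have h1 : n + 1 - 2 = (n - 2) + 1 := by omega
    have h2 : (n + 1) ^ 2 ≤ 2 * n ^ 2 := by nlinarith
    calc (n + 1) ^ 2 ≤ 2 * n ^ 2 := h2
      _ ≤ 2 * 2 ^ (n - 2) := Nat.mul_le_mul_left 2 ih
      _ = 2 ^ (n + 1 - 2) := by rw [h1]; ring

private lemma analytic_bound {n : ℕ} (hn : 8 ≤ n) :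
    (((n : ℝ) - 1) / n) ^ (2 ^ (n - 2)) ≤ (1 / 2 : ℝ) ^ n := by
  have hn0 : (0 : ℝ) < n := by exact_mod_cast Nat.lt_of_lt_of_le (by norm_num) hn
  have hn8 : (8 : ℝ) ≤ n := by exact_mod_cast hn
  have hc0 : (0 : ℝ) ≤ ((n : ℝ) - 1) / n := by
    apply div_nonneg <;> linarith
  have hc1 : ((n : ℝ) - 1) / n ≤ 1 := by
    rw [div_le_one hn0]; linarith
  have hstep : (((n : ℝ) - 1) / n) ^ n ≤ 1 / 2 := by
    have h1 : ((n : ℝ) - 1) / n ≤ Real.exp (-(1 / n)) := by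
      have h2 := Real.add_one_le_exp (-(1 / (n : ℝ)))
      have h3 : ((n : ℝ) - 1) / n = -(1 / n) + 1 := by field_simp; ring
      linarith [h3 ▸ h2]
    calc (((n : ℝ) - 1) / n) ^ n ≤ (Real.exp (-(1 / n))) ^ n := pow_le_pow_left₀ hc0 h1 n
      _ = Real.exp (-1) := by
          rw [← Real.exp_nat_mul]
          congr 1
          field_simp
      _ ≤ 1 / 2 := by
          have h2 : (2 : ℝ) ≤ Real.exp 1 := by linarith [Real.add_one_le_exp (1 : ℝ)]
          rw [Real.exp_neg]
          rw [inv_le_comm₀ (by linarith) (by norm_num)]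
          linarith
  calc (((n : ℝ) - 1) / n) ^ (2 ^ (n - 2)) ≤ (((n : ℝ) - 1) / n) ^ (n ^ 2) :=
        pow_le_pow_of_le_one hc0 hc1 (sq_le_two_pow hn)
    _ = ((((n : ℝ) - 1) / n) ^ n) ^ n := by rw [← pow_mul, sq]
    _ ≤ (1 / 2 : ℝ) ^ n := pow_le_pow_left₀ (pow_nonneg hc0 n) hstep n

private lemma union_bound {Y : Type*} [Fintype Y] [DecidableEq Y] :
    Nat.card {c : Finset Y → Y // IsChoice c ∧ ¬ Inconsistent c} ≤
      ∑ pr ∈ (univ : Finset (Y × Y)).filter (fun pr => pr.1 ≠ pr.2),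
        Nat.card {c : Finset Y → Y // ∀ A, (A.Nonempty → c A ∈ A) ∧
          (pr.1 ∈ A → pr.2 ∈ A → c A ≠ pr.1)} := by
  classical
  simp only [Nat.card_eq_fintype_card, Fintype.card_subtype]
  have hsub : (univ.filter fun c : Finset Y → Y => IsChoice c ∧ ¬ Inconsistent c) ⊆
      ((univ : Finset (Y × Y)).filter (fun pr => pr.1 ≠ pr.2)).biUnion
        (fun pr => univ.filter (fun c : Finset Y → Y => ∀ A, (A.Nonempty → c A ∈ A) ∧
          (pr.1 ∈ A → pr.2 ∈ A → c A ≠ pr.1))) := by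
    intro c hc
    simp only [Finset.mem_filter, Finset.mem_univ, true_and] at hc
    obtain ⟨hch, hni⟩ := hc
    rw [Inconsistent] at hni
    push_neg at hni
    obtain ⟨a, b, hab, hno⟩ := hni
    have hIC : ∀ A : Finset Y, A.Nonempty → c A ∈ A := hch
    by_cases h1 : ∀ A : Finset Y, a ∈ A → b ∈ A → c A ≠ a
    · rw [Finset.mem_biUnion]
      refine ⟨(a, b), Finset.mem_filter.2 ⟨Finset.mem_univ _, hab⟩,
        Finset.mem_filter.2 ⟨Finset.mem_univ _, fun A => ⟨hIC A, h1 A⟩⟩⟩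
    · push_neg at h1
      obtain ⟨A, ha, hb, hcA⟩ := h1
      have h2 : ∀ B : Finset Y, b ∈ B → a ∈ B → c B ≠ b := by
        intro B hbB haB hcB
        have hrev : IsReversal c A B := by
          refine ⟨⟨a, ha⟩, ⟨b, hbB⟩, ?_, ?_, ?_, ?_⟩
          · rintro rfl
            exact hab (hcA ▸ hcB ▸ rfl)
          · rw [hcA, hcB]; exact hab
          · rw [hcA, Finset.mem_inter]; exact ⟨ha, haB⟩
          · rw [hcB, Finset.mem_inter]; exact ⟨hb, hbB⟩
        exact hno A B hrev hcA hcB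
      rw [Finset.mem_biUnion]
      exact ⟨(b, a), Finset.mem_filter.2 ⟨Finset.mem_univ _, hab.symm⟩,
        Finset.mem_filter.2 ⟨Finset.mem_univ _, fun B => ⟨hIC B, h2 B⟩⟩⟩
  exact le_trans (Finset.card_le_card hsub) Finset.card_biUnion_le

private lemma real_pair {Y : Type*} [Fintype Y] [DecidableEq Y] (hn8 : 8 ≤ Fintype.card Y)
    {x y : Y} (hxy : x ≠ y) :
    (Nat.card {c : Finset Y → Y // ∀ A, (A.Nonempty → c A ∈ A) ∧ (x ∈ A → y ∈ A → c A ≠ x)} : ℝ) ≤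
      (Nat.card {c : Finset Y → Y // IsChoice c} : ℝ) * (1 / 2 : ℝ) ^ (Fintype.card Y) := by
  classical
  set m := Fintype.card Y with hm
  have hm0 : (0 : ℝ) < m := by
    have h9 : 0 < m := lt_of_lt_of_le (by norm_num) hn8
    exact_mod_cast h9
  have h1 := pair_nat (Y := Y) x y
  rw [K_eq hxy] at h1
  set K := 2 ^ (m - 2) with hK
  set Bc := Nat.card {c : Finset Y → Y // ∀ A, (A.Nonempty → c A ∈ A) ∧ (x ∈ A → y ∈ A → c A ≠ x)}
  set T := Nat.card {c : Finset Y → Y // IsChoice c}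
  have hcast : (Bc : ℝ) * (m : ℝ) ^ K ≤ (T : ℝ) * ((m : ℝ) - 1) ^ K := by
    have hsub : ((m - 1 : ℕ) : ℝ) = (m : ℝ) - 1 := by
      have h9 : 1 ≤ m := le_trans (by norm_num) hn8
      push_cast [h9]
      ring
    calc (Bc : ℝ) * (m : ℝ) ^ K = ((Bc * m ^ K : ℕ) : ℝ) := by push_cast; ring
      _ ≤ ((T * (m - 1) ^ K : ℕ) : ℝ) := by exact_mod_cast h1
      _ = (T : ℝ) * ((m : ℝ) - 1) ^ K := by push_cast [hsub]; ring
  have h2 : (Bc : ℝ) ≤ (T : ℝ) * (((m : ℝ) - 1) / m) ^ K := by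
    rw [div_pow, ← mul_div_assoc, le_div_iff₀ (pow_pos hm0 K)]
    exact hcast
  refine h2.trans ?_
  apply mul_le_mul_of_nonneg_left _ (Nat.cast_nonneg T)
  exact analytic_bound hn8

end StmtNineteenAux

theorem stmt19 :
    ∀ ε : ℝ, 0 < ε → ∃ N : ℕ, ∀ n : ℕ, N ≤ n →
      (1 - ε) * (Nat.card {c : Finset (Fin n) → Fin n // IsChoice c} : ℝ) ≤
        (Nat.card {c : Finset (Fin n) → Fin n // IsChoice c ∧ Inconsistent c} : ℝ) := by
  classical
  intro ε hε
  have htend := tendsto_pow_const_mul_const_pow_of_abs_lt_one 2 (r := 1/2) (by rw [abs_of_nonneg] <;> norm_num)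
  have hev : ∀ᶠ n : ℕ in Filter.atTop, (n : ℝ) ^ 2 * (1 / 2 : ℝ) ^ n < ε :=
    htend.eventually_lt_const hε
  obtain ⟨N₀, hN₀⟩ := Filter.eventually_atTop.1 hev
  refine ⟨max N₀ 8, fun n hn => ?_⟩
  have hn8 : 8 ≤ n := le_trans (le_max_right _ _) hn
  have hnN : N₀ ≤ n := le_trans (le_max_left _ _) hn
  have hcard : Fintype.card (Fin n) = n := Fintype.card_fin n
  set T := Nat.card {c : Finset (Fin n) → Fin n // IsChoice c} with hT
  set G := Nat.card {c : Finset (Fin n) → Fin n // IsChoice c ∧ Inconsistent c} with hG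
  set B := Nat.card {c : Finset (Fin n) → Fin n // IsChoice c ∧ ¬ Inconsistent c} with hB
  have hsplit : G + B = T := card_split _ _
  have hub := union_bound (Y := Fin n)
  have hBr : (B : ℝ) ≤ ε * T := by
    have hsum : (B : ℝ) ≤ ∑ pr ∈ (Finset.univ : Finset (Fin n × Fin n)).filter
        (fun pr => pr.1 ≠ pr.2),
        (Nat.card {c : Finset (Fin n) → Fin n // ∀ A, (A.Nonempty → c A ∈ A) ∧
          (pr.1 ∈ A → pr.2 ∈ A → c A ≠ pr.1)} : ℝ) := by
      exact_mod_cast hub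
    have hterm : ∀ pr ∈ (Finset.univ : Finset (Fin n × Fin n)).filter (fun pr => pr.1 ≠ pr.2),
        (Nat.card {c : Finset (Fin n) → Fin n // ∀ A, (A.Nonempty → c A ∈ A) ∧
          (pr.1 ∈ A → pr.2 ∈ A → c A ≠ pr.1)} : ℝ) ≤ (T : ℝ) * (1 / 2 : ℝ) ^ n := by
      intro pr hpr
      have hxy : pr.1 ≠ pr.2 := (Finset.mem_filter.1 hpr).2
      have := real_pair (Y := Fin n) (by rw [hcard]; exact hn8) hxy
      rwa [hcard] at this
    have hsum2 : (B : ℝ) ≤ ((Finset.univ : Finset (Fin n × Fin n)).filter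
        (fun pr => pr.1 ≠ pr.2)).card * ((T : ℝ) * (1 / 2 : ℝ) ^ n) := by
      refine hsum.trans ?_
      calc _ ≤ ∑ _pr ∈ (Finset.univ : Finset (Fin n × Fin n)).filter (fun pr => pr.1 ≠ pr.2),
            (T : ℝ) * (1 / 2 : ℝ) ^ n := Finset.sum_le_sum hterm
        _ = _ := by rw [Finset.sum_const, nsmul_eq_mul]
    have hPcard : (((Finset.univ : Finset (Fin n × Fin n)).filter
        (fun pr => pr.1 ≠ pr.2)).card : ℝ) ≤ (n : ℝ) ^ 2 := by
      have h1 : ((Finset.univ : Finset (Fin n × Fin n)).filter (fun pr => pr.1 ≠ pr.2)).card ≤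
          Fintype.card (Fin n × Fin n) := by
        rw [← Finset.card_univ]
        exact Finset.card_le_card (Finset.filter_subset _ _)
      have h2 : Fintype.card (Fin n × Fin n) = n ^ 2 := by
        simp [Fintype.card_prod, sq]
      calc _ ≤ ((n ^ 2 : ℕ) : ℝ) := by exact_mod_cast h2 ▸ h1
        _ = (n : ℝ) ^ 2 := by push_cast; ring
    have hhalf : (0 : ℝ) ≤ (1 / 2 : ℝ) ^ n := by positivity
    calc (B : ℝ) ≤ _ := hsum2
      _ ≤ (n : ℝ) ^ 2 * ((T : ℝ) * (1 / 2 : ℝ) ^ n) := by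
          apply mul_le_mul_of_nonneg_right hPcard
          positivity
      _ = ((n : ℝ) ^ 2 * (1 / 2 : ℝ) ^ n) * T := by ring
      _ ≤ ε * T := by
          apply mul_le_mul_of_nonneg_right (le_of_lt (hN₀ n hnN)) (Nat.cast_nonneg T)
  have hGT : (G : ℝ) = (T : ℝ) - B := by
    have : (G : ℝ) + B = T := by exact_mod_cast congrArg (Nat.cast : ℕ → ℝ) hsplit
    linarith
  rw [hGT]
  have hT0 : (0 : ℝ) ≤ T := Nat.cast_nonneg T
  nlinarith [hBr]
end
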